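/- Let α, β, γ ∈ (0,1) satisfy α+β+γ > 1, −α+β+γ < 1, α−β+γ < 1 and α+β−γ < 1, and let E₁, E₂, E₃ be arbitrary real numbers. Then the system p² − α²(p+q+r)² = E₁, q² − β²(p+q+r)² = E₂, r² − γ²(p+q+r)² = E₃ has at least one real solution (p, q, r). -/
import Mathlib


lemma sqrt_le_upper (E c y : ℝ) (h : 0 ≤ c * y) :
    Real.sqrt (E + c^2*y^2) ≤ c*y + Real.sqrt |E| := by
  have hs := Real.sqrt_nonneg |E|
  have h2 := Real.sq_sqrt (abs_nonneg E)
  calc Real.sqrt (E + c^2*y^2) ≤ Real.sqrt ((c*y + Real.sqrt |E|)^2) :=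
        Real.sqrt_le_sqrt (by nlinarith [le_abs_self E])
    _ = c*y + Real.sqrt |E| := Real.sqrt_sq (by linarith)

lemma sqrt_ge_lower (E c y : ℝ) (h : Real.sqrt |E| ≤ c * y) :
    c*y - Real.sqrt |E| ≤ Real.sqrt (E + c^2*y^2) := by
  have hs := Real.sqrt_nonneg |E|
  have h2 := Real.sq_sqrt (abs_nonneg E)
  have h0 : (0:ℝ) ≤ c*y - Real.sqrt |E| := by linarith
  rw [show c*y - Real.sqrt |E| = Real.sqrt ((c*y - Real.sqrt |E|)^2) from (Real.sqrt_sq h0).symm]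
  exact Real.sqrt_le_sqrt (by nlinarith [neg_abs_le E, mul_nonneg (sub_nonneg.2 h) hs])

lemma sigma_sqrt_le (E c y σ : ℝ) (hσ : σ = 1 ∨ σ = -1) (h : Real.sqrt |E| ≤ c*y) :
    σ * Real.sqrt (E + c^2*y^2) ≤ σ*(c*y) + Real.sqrt |E| := by
  have h0 : 0 ≤ c*y := le_trans (Real.sqrt_nonneg _) h
  rcases hσ with h' | h' <;> subst h'
  · simpa using sqrt_le_upper E c y h0
  · have := sqrt_ge_lower E c y h
    nlinarith [this]

noncomputable def Fx (E₁ E₂ E₃ c₁ c₂ c₃ σ₁ σ₂ σ₃ : ℝ) (y : ℝ) : ℝ :=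
  σ₁ * Real.sqrt (E₁ + c₁^2*y^2) + σ₂ * Real.sqrt (E₂ + c₂^2*y^2) +
    σ₃ * Real.sqrt (E₃ + c₃^2*y^2) - y

lemma Fx_cont (E₁ E₂ E₃ c₁ c₂ c₃ σ₁ σ₂ σ₃ : ℝ) :
    Continuous (Fx E₁ E₂ E₃ c₁ c₂ c₃ σ₁ σ₂ σ₃) := by
  unfold Fx; fun_prop

lemma cross_pos (E₁ E₂ E₃ c₁ c₂ c₃ Y₀ : ℝ)
    (hc₁ : 0 < c₁) (hc₂ : 0 < c₂) (hc₃ : 0 < c₃)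
    (hslope : 1 < c₁ + c₂ + c₃) (hY₀ : 0 ≤ Y₀)
    (h0 : Fx E₁ E₂ E₃ c₁ c₂ c₃ 1 1 1 Y₀ ≤ 0) :
    ∃ y, Y₀ ≤ y ∧ Fx E₁ E₂ E₃ c₁ c₂ c₃ 1 1 1 y = 0 := by
  set s₁ := Real.sqrt |E₁| with hs₁def
  set s₂ := Real.sqrt |E₂| with hs₂def
  set s₃ := Real.sqrt |E₃| with hs₃def
  have hs1 : 0 ≤ s₁ := Real.sqrt_nonneg _
  have hs2 : 0 ≤ s₂ := Real.sqrt_nonneg _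
  have hs3 : 0 ≤ s₃ := Real.sqrt_nonneg _
  set Y₂ := Y₀ + s₁/c₁ + s₂/c₂ + s₃/c₃ + (s₁+s₂+s₃)/(c₁+c₂+c₃-1) with hY₂def
  have hd1 : 0 ≤ s₁/c₁ := div_nonneg hs1 hc₁.le
  have hd2 : 0 ≤ s₂/c₂ := div_nonneg hs2 hc₂.le
  have hd3 : 0 ≤ s₃/c₃ := div_nonneg hs3 hc₃.le
  have hd4 : 0 ≤ (s₁+s₂+s₃)/(c₁+c₂+c₃-1) := div_nonneg (by linarith) (by linarith)
  have hY₂Y₀ : Y₀ ≤ Y₂ := by rw [hY₂def]; linarith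
  have hb₁ : s₁ ≤ c₁ * Y₂ := by
    have h' : s₁/c₁ ≤ Y₂ := by rw [hY₂def]; linarith
    have := (div_le_iff₀ hc₁).mp h'
    linarith [mul_comm Y₂ c₁]
  have hb₂ : s₂ ≤ c₂ * Y₂ := by
    have h' : s₂/c₂ ≤ Y₂ := by rw [hY₂def]; linarith
    have := (div_le_iff₀ hc₂).mp h'
    linarith [mul_comm Y₂ c₂]
  have hb₃ : s₃ ≤ c₃ * Y₂ := by
    have h' : s₃/c₃ ≤ Y₂ := by rw [hY₂def]; linarith
    have := (div_le_iff₀ hc₃).mp h'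
    linarith [mul_comm Y₂ c₃]
  have hbig : s₁+s₂+s₃ ≤ (c₁+c₂+c₃-1)*Y₂ := by
    have h' : (s₁+s₂+s₃)/(c₁+c₂+c₃-1) ≤ Y₂ := by rw [hY₂def]; linarith
    have := (div_le_iff₀ (by linarith : (0:ℝ) < c₁+c₂+c₃-1)).mp h'
    linarith [mul_comm Y₂ (c₁+c₂+c₃-1)]
  have hF2 : 0 ≤ Fx E₁ E₂ E₃ c₁ c₂ c₃ 1 1 1 Y₂ := by
    have l₁ := sqrt_ge_lower E₁ c₁ Y₂ hb₁
    have l₂ := sqrt_ge_lower E₂ c₂ Y₂ hb₂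
    have l₃ := sqrt_ge_lower E₃ c₃ Y₂ hb₃
    simp only [Fx, one_mul]
    rw [← hs₁def] at l₁; rw [← hs₂def] at l₂; rw [← hs₃def] at l₃
    linarith
  have hcont := (Fx_cont E₁ E₂ E₃ c₁ c₂ c₃ 1 1 1).continuousOn (s := Set.Icc Y₀ Y₂)
  obtain ⟨y, hy, hFy⟩ := intermediate_value_Icc hY₂Y₀ hcont ⟨h0, hF2⟩
  exact ⟨y, hy.1, hFy⟩

lemma cross_neg (E₁ E₂ E₃ c₁ c₂ c₃ Y₀ σ₁ σ₂ σ₃ : ℝ)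
    (hσ₁ : σ₁ = 1 ∨ σ₁ = -1) (hσ₂ : σ₂ = 1 ∨ σ₂ = -1) (hσ₃ : σ₃ = 1 ∨ σ₃ = -1)
    (hc₁ : 0 < c₁) (hc₂ : 0 < c₂) (hc₃ : 0 < c₃)
    (hslope : σ₁*c₁ + σ₂*c₂ + σ₃*c₃ < 1) (hY₀ : 0 ≤ Y₀)
    (h0 : 0 ≤ Fx E₁ E₂ E₃ c₁ c₂ c₃ σ₁ σ₂ σ₃ Y₀) :
    ∃ y, Y₀ ≤ y ∧ Fx E₁ E₂ E₃ c₁ c₂ c₃ σ₁ σ₂ σ₃ y = 0 := by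
  set s₁ := Real.sqrt |E₁| with hs₁def
  set s₂ := Real.sqrt |E₂| with hs₂def
  set s₃ := Real.sqrt |E₃| with hs₃def
  have hs1 : 0 ≤ s₁ := Real.sqrt_nonneg _
  have hs2 : 0 ≤ s₂ := Real.sqrt_nonneg _
  have hs3 : 0 ≤ s₃ := Real.sqrt_nonneg _
  set μ := σ₁*c₁ + σ₂*c₂ + σ₃*c₃ with hμdef
  set Y₂ := Y₀ + s₁/c₁ + s₂/c₂ + s₃/c₃ + (s₁+s₂+s₃)/(1-μ) with hY₂def
  have hd1 : 0 ≤ s₁/c₁ := div_nonneg hs1 hc₁.le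
  have hd2 : 0 ≤ s₂/c₂ := div_nonneg hs2 hc₂.le
  have hd3 : 0 ≤ s₃/c₃ := div_nonneg hs3 hc₃.le
  have hd4 : 0 ≤ (s₁+s₂+s₃)/(1-μ) := div_nonneg (by linarith) (by linarith)
  have hY₂Y₀ : Y₀ ≤ Y₂ := by rw [hY₂def]; linarith
  have hb₁ : s₁ ≤ c₁ * Y₂ := by
    have h' : s₁/c₁ ≤ Y₂ := by rw [hY₂def]; linarith
    have := (div_le_iff₀ hc₁).mp h'
    linarith [mul_comm Y₂ c₁]
  have hb₂ : s₂ ≤ c₂ * Y₂ := by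
    have h' : s₂/c₂ ≤ Y₂ := by rw [hY₂def]; linarith
    have := (div_le_iff₀ hc₂).mp h'
    linarith [mul_comm Y₂ c₂]
  have hb₃ : s₃ ≤ c₃ * Y₂ := by
    have h' : s₃/c₃ ≤ Y₂ := by rw [hY₂def]; linarith
    have := (div_le_iff₀ hc₃).mp h'
    linarith [mul_comm Y₂ c₃]
  have hbig : s₁+s₂+s₃ ≤ (1-μ)*Y₂ := by
    have h' : (s₁+s₂+s₃)/(1-μ) ≤ Y₂ := by rw [hY₂def]; linarith
    have := (div_le_iff₀ (by linarith : (0:ℝ) < 1-μ)).mp h'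
    linarith [mul_comm Y₂ (1-μ)]
  have hF2 : Fx E₁ E₂ E₃ c₁ c₂ c₃ σ₁ σ₂ σ₃ Y₂ ≤ 0 := by
    have l₁ := sigma_sqrt_le E₁ c₁ Y₂ σ₁ hσ₁ hb₁
    have l₂ := sigma_sqrt_le E₂ c₂ Y₂ σ₂ hσ₂ hb₂
    have l₃ := sigma_sqrt_le E₃ c₃ Y₂ σ₃ hσ₃ hb₃
    simp only [Fx]
    rw [← hs₁def] at l₁; rw [← hs₂def] at l₂; rw [← hs₃def] at l₃
    have : σ₁*(c₁*Y₂) + σ₂*(c₂*Y₂) + σ₃*(c₃*Y₂) = μ * Y₂ := by rw [hμdef]; ring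
    nlinarith
  have hcont := (Fx_cont E₁ E₂ E₃ c₁ c₂ c₃ σ₁ σ₂ σ₃).continuousOn (s := Set.Icc Y₀ Y₂)
  obtain ⟨y, hy, hFy⟩ := intermediate_value_Icc' hY₂Y₀ hcont ⟨hF2, h0⟩
  exact ⟨y, hy.1, hFy⟩

lemma finish_lemma (E₁ E₂ E₃ c₁ c₂ c₃ σ₁ σ₂ σ₃ y : ℝ)
    (hσ₁ : σ₁ = 1 ∨ σ₁ = -1) (hσ₂ : σ₂ = 1 ∨ σ₂ = -1) (hσ₃ : σ₃ = 1 ∨ σ₃ = -1)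
    (h₁ : 0 ≤ E₁ + c₁^2*y^2) (h₂ : 0 ≤ E₂ + c₂^2*y^2) (h₃ : 0 ≤ E₃ + c₃^2*y^2)
    (hF : Fx E₁ E₂ E₃ c₁ c₂ c₃ σ₁ σ₂ σ₃ y = 0) :
    ∃ p q r : ℝ, p^2 - c₁^2*(p+q+r)^2 = E₁ ∧
      q^2 - c₂^2*(p+q+r)^2 = E₂ ∧ r^2 - c₃^2*(p+q+r)^2 = E₃ := by
  refine ⟨σ₁ * Real.sqrt (E₁ + c₁^2*y^2), σ₂ * Real.sqrt (E₂ + c₂^2*y^2),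
    σ₃ * Real.sqrt (E₃ + c₃^2*y^2), ?_, ?_, ?_⟩ <;>
  · unfold Fx at hF
    have hsum : σ₁ * Real.sqrt (E₁ + c₁^2*y^2) + σ₂ * Real.sqrt (E₂ + c₂^2*y^2) +
        σ₃ * Real.sqrt (E₃ + c₃^2*y^2) = y := by linarith
    rw [hsum, mul_pow]
    have e₁ : σ₁^2 = 1 := by rcases hσ₁ with h|h <;> rw [h] <;> norm_num
    have e₂ : σ₂^2 = 1 := by rcases hσ₂ with h|h <;> rw [h] <;> norm_num
    have e₃ : σ₃^2 = 1 := by rcases hσ₃ with h|h <;> rw [h] <;> norm_num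
    first
      | (rw [e₁, Real.sq_sqrt h₁]; ring)
      | (rw [e₂, Real.sq_sqrt h₂]; ring)
      | (rw [e₃, Real.sq_sqrt h₃]; ring)

lemma solve_pattern (E₁ E₂ E₃ c₁ c₂ c₃ σ₁ σ₂ σ₃ Y₀ : ℝ)
    (hσ₁ : σ₁ = 1 ∨ σ₁ = -1) (hσ₂ : σ₂ = 1 ∨ σ₂ = -1) (hσ₃ : σ₃ = 1 ∨ σ₃ = -1)
    (hY₀ : 0 ≤ Y₀)
    (hR₁ : 0 ≤ E₁ + c₁^2*Y₀^2) (hR₂ : 0 ≤ E₂ + c₂^2*Y₀^2) (hR₃ : 0 ≤ E₃ + c₃^2*Y₀^2)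
    (hex : ∃ y, Y₀ ≤ y ∧ Fx E₁ E₂ E₃ c₁ c₂ c₃ σ₁ σ₂ σ₃ y = 0) :
    ∃ p q r : ℝ, p^2 - c₁^2*(p+q+r)^2 = E₁ ∧
      q^2 - c₂^2*(p+q+r)^2 = E₂ ∧ r^2 - c₃^2*(p+q+r)^2 = E₃ := by
  obtain ⟨y, hy, hFy⟩ := hex
  have hmono : 0 ≤ (y - Y₀) * (y + Y₀) :=
    mul_nonneg (by linarith) (by linarith)
  exact finish_lemma E₁ E₂ E₃ c₁ c₂ c₃ σ₁ σ₂ σ₃ y hσ₁ hσ₂ hσ₃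
    (by nlinarith [mul_nonneg (sq_nonneg c₁) hmono])
    (by nlinarith [mul_nonneg (sq_nonneg c₂) hmono])
    (by nlinarith [mul_nonneg (sq_nonneg c₃) hmono]) hFy

set_option maxHeartbeats 1000000 in
theorem stmt8 (α β γ E₁ E₂ E₃ : ℝ)
    (hα : α ∈ Set.Ioo (0:ℝ) 1) (hβ : β ∈ Set.Ioo (0:ℝ) 1)
    (hγ : γ ∈ Set.Ioo (0:ℝ) 1)
    (h1 : 1 < α + β + γ) (h2 : -α + β + γ < 1)
    (h3 : α - β + γ < 1) (h4 : α + β - γ < 1) :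
    ∃ p q r : ℝ, p^2 - α^2*(p+q+r)^2 = E₁ ∧
      q^2 - β^2*(p+q+r)^2 = E₂ ∧ r^2 - γ^2*(p+q+r)^2 = E₃ := by
  obtain ⟨hα0, hα1⟩ := hα
  obtain ⟨hβ0, hβ1⟩ := hβ
  obtain ⟨hγ0, hγ1⟩ := hγ
  set t₁ := Real.sqrt (-E₁) / α with ht₁def
  set t₂ := Real.sqrt (-E₂) / β with ht₂def
  set t₃ := Real.sqrt (-E₃) / γ with ht₃def
  have ht₁ : 0 ≤ t₁ := div_nonneg (Real.sqrt_nonneg _) hα0.le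
  have ht₂ : 0 ≤ t₂ := div_nonneg (Real.sqrt_nonneg _) hβ0.le
  have ht₃ : 0 ≤ t₃ := div_nonneg (Real.sqrt_nonneg _) hγ0.le
  have hneg₁ : E₁ ≤ 0 → α^2*t₁^2 = -E₁ := by
    intro h
    have h' := Real.sq_sqrt (by linarith : (0:ℝ) ≤ -E₁)
    rw [ht₁def]; field_simp; linarith
  have hneg₂ : E₂ ≤ 0 → β^2*t₂^2 = -E₂ := by
    intro h
    have h' := Real.sq_sqrt (by linarith : (0:ℝ) ≤ -E₂)
    rw [ht₂def]; field_simp; linarith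
  have hneg₃ : E₃ ≤ 0 → γ^2*t₃^2 = -E₃ := by
    intro h
    have h' := Real.sq_sqrt (by linarith : (0:ℝ) ≤ -E₃)
    rw [ht₃def]; field_simp; linarith
  have hpos₁ : 0 < t₁ → E₁ + α^2*t₁^2 = 0 := by
    intro h
    have hs : 0 < Real.sqrt (-E₁) := by
      rw [ht₁def] at h
      rcases div_pos_iff.mp h with ⟨h', _⟩ | ⟨_, h'⟩
      · exact h'
      · linarith
    have hE := Real.sqrt_pos.mp hs
    rw [hneg₁ (by linarith)]; ring
  have hpos₂ : 0 < t₂ → E₂ + β^2*t₂^2 = 0 := by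
    intro h
    have hs : 0 < Real.sqrt (-E₂) := by
      rw [ht₂def] at h
      rcases div_pos_iff.mp h with ⟨h', _⟩ | ⟨_, h'⟩
      · exact h'
      · linarith
    have hE := Real.sqrt_pos.mp hs
    rw [hneg₂ (by linarith)]; ring
  have hpos₃ : 0 < t₃ → E₃ + γ^2*t₃^2 = 0 := by
    intro h
    have hs : 0 < Real.sqrt (-E₃) := by
      rw [ht₃def] at h
      rcases div_pos_iff.mp h with ⟨h', _⟩ | ⟨_, h'⟩
      · exact h'
      · linarith
    have hE := Real.sqrt_pos.mp hs
    rw [hneg₃ (by linarith)]; ring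
  clear_value t₁ t₂ t₃
  clear ht₁def ht₂def ht₃def
  set Y₀ := max (max t₁ t₂) t₃ with hY₀def
  have hY₀t₁ : t₁ ≤ Y₀ := le_trans (le_max_left _ _) (le_max_left _ _)
  have hY₀t₂ : t₂ ≤ Y₀ := le_trans (le_max_right _ _) (le_max_left _ _)
  have hY₀t₃ : t₃ ≤ Y₀ := le_max_right _ _
  have hY₀ : 0 ≤ Y₀ := le_trans ht₁ hY₀t₁
  have hchoice : Y₀ = t₁ ∨ Y₀ = t₂ ∨ Y₀ = t₃ := by
    rcases max_choice (max t₁ t₂) t₃ with h' | h'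
    · rcases max_choice t₁ t₂ with h'' | h''
      · exact Or.inl (by rw [hY₀def, h', h''])
      · exact Or.inr (Or.inl (by rw [hY₀def, h', h'']))
    · exact Or.inr (Or.inr (by rw [hY₀def, h']))
  clear_value Y₀
  clear hY₀def
  have hR₁ : 0 ≤ E₁ + α^2*Y₀^2 := by
    rcases le_or_gt E₁ 0 with h | h
    · have := hneg₁ h
      nlinarith [mul_nonneg (sq_nonneg α) (mul_nonneg (by linarith : 0 ≤ Y₀ - t₁) (by linarith : 0 ≤ Y₀ + t₁))]
    · nlinarith [sq_nonneg (α*Y₀)]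
  have hR₂ : 0 ≤ E₂ + β^2*Y₀^2 := by
    rcases le_or_gt E₂ 0 with h | h
    · have := hneg₂ h
      nlinarith [mul_nonneg (sq_nonneg β) (mul_nonneg (by linarith : 0 ≤ Y₀ - t₂) (by linarith : 0 ≤ Y₀ + t₂))]
    · nlinarith [sq_nonneg (β*Y₀)]
  have hR₃ : 0 ≤ E₃ + γ^2*Y₀^2 := by
    rcases le_or_gt E₃ 0 with h | h
    · have := hneg₃ h
      nlinarith [mul_nonneg (sq_nonneg γ) (mul_nonneg (by linarith : 0 ≤ Y₀ - t₃) (by linarith : 0 ≤ Y₀ + t₃))]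
    · nlinarith [sq_nonneg (γ*Y₀)]
  -- vanishing dichotomy
  have hvan : Y₀ = 0 ∨ E₁ + α^2*Y₀^2 = 0 ∨ E₂ + β^2*Y₀^2 = 0 ∨ E₃ + γ^2*Y₀^2 = 0 := by
    rcases eq_or_lt_of_le hY₀ with h | h
    · exact Or.inl h.symm
    · rcases hchoice with he | he | he
      · exact Or.inr (Or.inl (by rw [he]; exact hpos₁ (he ▸ h)))
      · exact Or.inr (Or.inr (Or.inl (by rw [he]; exact hpos₂ (he ▸ h))))
      · exact Or.inr (Or.inr (Or.inr (by rw [he]; exact hpos₃ (he ▸ h))))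
  -- main case analysis
  rcases le_or_gt (Fx E₁ E₂ E₃ α β γ 1 1 1 Y₀) 0 with hF0 | hF0
  · exact solve_pattern E₁ E₂ E₃ α β γ 1 1 1 Y₀ (Or.inl rfl) (Or.inl rfl) (Or.inl rfl)
      hY₀ hR₁ hR₂ hR₃ (cross_pos E₁ E₂ E₃ α β γ Y₀ hα0 hβ0 hγ0 h1 hY₀ hF0)
  · -- Fx(1,1,1)(Y₀) > 0 : find a one-minus pattern that is ≥ 0 at Y₀
    have hone : 0 ≤ Fx E₁ E₂ E₃ α β γ (-1) 1 1 Y₀ ∨ 0 ≤ Fx E₁ E₂ E₃ α β γ 1 (-1) 1 Y₀ ∨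
        0 ≤ Fx E₁ E₂ E₃ α β γ 1 1 (-1) Y₀ := by
      by_contra hcon
      push_neg at hcon
      obtain ⟨hc1, hc2, hc3⟩ := hcon
      rcases hvan with hv | hv | hv | hv
      · -- Y₀ = 0 : sum of the three one-minus values is √+√+√ - 3Y₀ ≥ 0
        have hsum : Fx E₁ E₂ E₃ α β γ (-1) 1 1 Y₀ + Fx E₁ E₂ E₃ α β γ 1 (-1) 1 Y₀ +
            Fx E₁ E₂ E₃ α β γ 1 1 (-1) Y₀ =
            Real.sqrt (E₁ + α^2*Y₀^2) + Real.sqrt (E₂ + β^2*Y₀^2) +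
              Real.sqrt (E₃ + γ^2*Y₀^2) - 3*Y₀ := by
          unfold Fx; ring
        nlinarith [Real.sqrt_nonneg (E₁ + α^2*Y₀^2), Real.sqrt_nonneg (E₂ + β^2*Y₀^2),
          Real.sqrt_nonneg (E₃ + γ^2*Y₀^2), hsum, hv]
      · have hz : Real.sqrt (E₁ + α^2*Y₀^2) = 0 := by rw [hv]; exact Real.sqrt_zero
        have : Fx E₁ E₂ E₃ α β γ (-1) 1 1 Y₀ = Fx E₁ E₂ E₃ α β γ 1 1 1 Y₀ := by
          unfold Fx; rw [hz]; ring
        linarith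
      · have hz : Real.sqrt (E₂ + β^2*Y₀^2) = 0 := by rw [hv]; exact Real.sqrt_zero
        have : Fx E₁ E₂ E₃ α β γ 1 (-1) 1 Y₀ = Fx E₁ E₂ E₃ α β γ 1 1 1 Y₀ := by
          unfold Fx; rw [hz]; ring
        linarith
      · have hz : Real.sqrt (E₃ + γ^2*Y₀^2) = 0 := by rw [hv]; exact Real.sqrt_zero
        have : Fx E₁ E₂ E₃ α β γ 1 1 (-1) Y₀ = Fx E₁ E₂ E₃ α β γ 1 1 1 Y₀ := by
          unfold Fx; rw [hz]; ring
        linarith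
    rcases hone with hF | hF | hF
    · exact solve_pattern E₁ E₂ E₃ α β γ (-1) 1 1 Y₀ (Or.inr rfl) (Or.inl rfl) (Or.inl rfl)
        hY₀ hR₁ hR₂ hR₃ (cross_neg E₁ E₂ E₃ α β γ Y₀ (-1) 1 1 (Or.inr rfl) (Or.inl rfl)
          (Or.inl rfl) hα0 hβ0 hγ0 (by linarith) hY₀ hF)
    · exact solve_pattern E₁ E₂ E₃ α β γ 1 (-1) 1 Y₀ (Or.inl rfl) (Or.inr rfl) (Or.inl rfl)
        hY₀ hR₁ hR₂ hR₃ (cross_neg E₁ E₂ E₃ α β γ Y₀ 1 (-1) 1 (Or.inl rfl) (Or.inr rfl)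
          (Or.inl rfl) hα0 hβ0 hγ0 (by linarith) hY₀ hF)
    · exact solve_pattern E₁ E₂ E₃ α β γ 1 1 (-1) Y₀ (Or.inl rfl) (Or.inl rfl) (Or.inr rfl)
        hY₀ hR₁ hR₂ hR₃ (cross_neg E₁ E₂ E₃ α β γ Y₀ 1 1 (-1) (Or.inl rfl) (Or.inl rfl)
          (Or.inr rfl) hα0 hβ0 hγ0 (by linarith) hY₀ hF)
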